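/- Let U : S(ℝⁿ) → S(ℝⁿ) be a map satisfying U(f·g) = U(f)·U(g) for all f, g ∈ S(ℝⁿ). If f, g ∈ S(ℝⁿ) and g(x) = 1 for every x in the support of f, then Ug(y) = 1 for every y in the support of Uf. -/
import Mathlib

open MeasureTheory SchwartzMap

theorem stmt_2 (n : ℕ)
    (U : SchwartzMap (EuclideanSpace ℝ (Fin n)) ℂ → SchwartzMap (EuclideanSpace ℝ (Fin n)) ℂ)
    (h2 : ∀ f g h : SchwartzMap (EuclideanSpace ℝ (Fin n)) ℂ,
      (∀ x, h x = f x * g x) → ∀ x, U h x = U f x * U g x)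
    (f g : SchwartzMap (EuclideanSpace ℝ (Fin n)) ℂ)
    (hg : ∀ x ∈ tsupport ⇑f, g x = 1) :
    ∀ y ∈ tsupport ⇑(U f), U g y = 1 := by
  have key : ∀ x, U f x = U f x * U g x := by
    apply h2 f g f
    intro x
    by_cases hx : x ∈ tsupport ⇑f
    · rw [hg x hx, mul_one]
    · rw [image_eq_zero_of_notMem_tsupport hx, zero_mul]
  have hsub : Function.support ⇑(U f) ⊆ {x | U g x = 1} := by
    intro x hx
    have hne : U f x ≠ 0 := hx
    have := (key x).symm
    exact (mul_right_eq_self₀.mp this).resolve_right hne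
  have hclosed : IsClosed {x | U g x = 1} :=
    isClosed_eq (U g).continuous continuous_const
  intro y hy
  exact closure_minimal hsub hclosed hy
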